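/- arXiv:2002.01251 — 11 statements merged into one kernel-verified Lean document; each statement's English description precedes it below -/
import Mathlib

section
/- If d is a metric on the strategy universe U, α ≤ 1/2, and aggr is a feasible aggregation function, then for every agent i and every state x, the aggregated strategy aggr_i(x_{-i}) is a best response of agent i to x_{-i}; i.e., for every strategy y ∈ Z, α·d(aggr_i(x_{-i}), s_i) ≤ α·d(y, s_i) + (1−α)·d(y, aggr_i(x_{-i})). Moreover, if α < 1/2, it is the unique best response. -/
noncomputable def prefCost {U : Type*} [MetricSpace U] {ι : Type*} (α : ℝ)
    (s : ι → U) (aggr : ι → (ι → U) → U) (i : ι) (z : ι → U) : ℝ :=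
  α * dist (s i) (z i) + (1 - α) * dist (z i) (aggr i z)

/-- if `α ≤ 1/2`, the aggregate `aggr i x` is a best response of agent `i`
to state `x`; if `α < 1/2`, it is the unique best response. -/
theorem stmt_0 {U : Type*} [MetricSpace U] {ι : Type*} [DecidableEq ι]
    (Z : Set U) (s : ι → U) (aggr : ι → (ι → U) → U) (α : ℝ)
    (hα0 : 0 ≤ α)
    (haggrZ : ∀ i x, aggr i x ∈ Z)
    (hindep : ∀ i (x y : ι → U), (∀ j, j ≠ i → x j = y j) → aggr i x = aggr i y)
    (i : ι) (x : ι → U) :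
    (α ≤ 1/2 → ∀ y ∈ Z,
      prefCost α s aggr i (Function.update x i (aggr i x))
        ≤ prefCost α s aggr i (Function.update x i y)) ∧
    (α < 1/2 → ∀ y ∈ Z, y ≠ aggr i x →
      prefCost α s aggr i (Function.update x i (aggr i x))
        < prefCost α s aggr i (Function.update x i y)) := by
  have key : ∀ y : U, aggr i (Function.update x i y) = aggr i x := by
    intro y
    exact hindep i _ _ (fun j hj => Function.update_of_ne hj y x)
  have hcost : ∀ y : U, prefCost α s aggr i (Function.update x i y)
      = α * dist (s i) y + (1 - α) * dist y (aggr i x) := by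
    intro y
    simp [prefCost, key, Function.update_self]
  constructor
  · intro hα y _
    rw [hcost, hcost]
    have htri : dist (s i) (aggr i x) ≤ dist (s i) y + dist y (aggr i x) :=
      dist_triangle _ _ _
    have hαle : α ≤ 1 - α := by linarith
    have h1 : α * dist (s i) (aggr i x) ≤ α * (dist (s i) y + dist y (aggr i x)) :=
      mul_le_mul_of_nonneg_left htri hα0
    have h2 : α * dist y (aggr i x) ≤ (1 - α) * dist y (aggr i x) :=
      mul_le_mul_of_nonneg_right hαle dist_nonneg
    simp only [dist_self, mul_zero, add_zero]
    nlinarith [dist_nonneg (x := s i) (y := y)]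
  · intro hα y _ hne
    rw [hcost, hcost]
    have htri : dist (s i) (aggr i x) ≤ dist (s i) y + dist y (aggr i x) :=
      dist_triangle _ _ _
    have hpos : 0 < dist y (aggr i x) := dist_pos.mpr hne
    have h1 : α * dist (s i) (aggr i x) ≤ α * (dist (s i) y + dist y (aggr i x)) :=
      mul_le_mul_of_nonneg_left htri hα0
    simp only [dist_self, mul_zero, add_zero]
    nlinarith
end

section
/- If d is a metric on U, α ≥ 1/2, and agent i has preferred strategy s_i ∈ Z, then s_i is a dominant strategy for agent i: for every state x with x(i) arbitrary, c_i([x_{-i}, s_i]) ≤ c_i(x). Moreover, if α > 1/2, s_i is the unique (strictly) dominant strategy, i.e., the inequality is strict whenever x(i) ≠ s_i. -/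
/-- if `α ≥ 1/2` and `s i ∈ Z`, then `s i` is a dominant strategy of agent `i`;
if `α > 1/2`, it is strictly dominant. -/
theorem stmt_1 {U : Type*} [MetricSpace U] {ι : Type*} [DecidableEq ι]
    (Z : Set U) (s : ι → U) (aggr : ι → (ι → U) → U) (α : ℝ)
    (hα1 : α ≤ 1)
    (haggrZ : ∀ i x, aggr i x ∈ Z)
    (hindep : ∀ i (x y : ι → U), (∀ j, j ≠ i → x j = y j) → aggr i x = aggr i y)
    (i : ι) (hsZ : s i ∈ Z) :
    (1/2 ≤ α → ∀ x : ι → U,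
      prefCost α s aggr i (Function.update x i (s i)) ≤ prefCost α s aggr i x) ∧
    (1/2 < α → ∀ x : ι → U, x i ≠ s i →
      prefCost α s aggr i (Function.update x i (s i)) < prefCost α s aggr i x) := by
  have key : ∀ x : ι → U,
      prefCost α s aggr i (Function.update x i (s i)) =
        (1 - α) * dist (s i) (aggr i x) := by
    intro x
    have ha : aggr i (Function.update x i (s i)) = aggr i x :=
      hindep i _ _ (fun j hj => Function.update_of_ne hj _ _)
    simp [prefCost, ha]
  constructor
  · intro hα x
    rw [key]
    have htri := dist_triangle (s i) (x i) (aggr i x)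
    have h1 : 0 ≤ dist (s i) (x i) := dist_nonneg
    have h2 : 0 ≤ dist (x i) (aggr i x) := dist_nonneg
    unfold prefCost
    nlinarith
  · intro hα x hx
    rw [key]
    have htri := dist_triangle (s i) (x i) (aggr i x)
    have h1 : 0 < dist (s i) (x i) := dist_pos.mpr fun h => hx (h.symm)
    have h2 : 0 ≤ dist (x i) (aggr i x) := dist_nonneg
    unfold prefCost
    nlinarith
end

section
/- In a preference game with local aggregation where d is a metric and the aggregation function satisfies unanimity, if α ≤ 1/2 then any consensus state e = (z, z, …, z) with z ∈ Z is a pure Nash equilibrium. -/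
/-- if `α ≤ 1/2` and the aggregation satisfies unanimity, any consensus
state is a pure Nash equilibrium. -/
theorem stmt_2 {U : Type*} [MetricSpace U] {ι : Type*} [DecidableEq ι]
    (Z : Set U) (s : ι → U) (aggr : ι → (ι → U) → U) (α : ℝ)
    (hα0 : 0 ≤ α) (hα : α ≤ 1/2)
    (haggrZ : ∀ i x, aggr i x ∈ Z)
    (hunanimity : ∀ i (z : ι → U) (x : U), (∀ j, j ≠ i → z j = x) → aggr i z = x)
    (z : U) (hz : z ∈ Z) :
    ∀ i, ∀ y ∈ Z,
      prefCost α s aggr i (fun _ => z)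
        ≤ prefCost α s aggr i (Function.update (fun _ => z) i y) := by
  intro i y hy
  have h1 : aggr i (fun _ => z) = z := hunanimity i _ z (fun j _ => rfl)
  have h2 : aggr i (Function.update (fun _ => z) i y) = z :=
    hunanimity i _ z (fun j hj => Function.update_of_ne hj _ _)
  simp only [prefCost, h1, h2, Function.update_self, dist_self, mul_zero, add_zero]
  have htri := dist_triangle (s i) y z
  have hαle : α ≤ 1 - α := by linarith
  have hd : (0:ℝ) ≤ dist y z := dist_nonneg
  nlinarith [mul_le_mul_of_nonneg_right htri hα0, mul_le_mul_of_nonneg_right hαle hd]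
end

section
/- In an unrestricted preference game with local aggregation (all preferred strategies s_i ∈ Z) with metric d: if α ≥ 1/2 then the state e with e(i) = s_i for all i is a pure Nash equilibrium; and if α > 1/2 then a state e is a pure Nash equilibrium if and only if e(i) = s_i for all agents i. -/
/-- A state `e` (with strategies in `Z`) is a pure Nash equilibrium. -/
def IsPNE {U : Type*} [MetricSpace U] {ι : Type*} [DecidableEq ι] (Z : Set U)
    (s : ι → U) (aggr : ι → (ι → U) → U) (α : ℝ) (e : ι → U) : Prop :=
  ∀ i, ∀ y ∈ Z, prefCost α s aggr i e ≤ prefCost α s aggr i (Function.update e i y)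

/-- in an unrestricted game, if `α ≥ 1/2` then the profile of preferred
strategies is an equilibrium; if `α > 1/2`, a state is an equilibrium iff every agent
plays her preferred strategy. -/
theorem stmt_3 {U : Type*} [MetricSpace U] {ι : Type*} [DecidableEq ι]
    (Z : Set U) (s : ι → U) (aggr : ι → (ι → U) → U) (α : ℝ)
    (hα1 : α ≤ 1)
    (haggrZ : ∀ i x, aggr i x ∈ Z)
    (hindep : ∀ i (x y : ι → U), (∀ j, j ≠ i → x j = y j) → aggr i x = aggr i y)
    (hunrestricted : ∀ i, s i ∈ Z) :
    (1/2 ≤ α → IsPNE Z s aggr α s) ∧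
    (1/2 < α → ∀ e : ι → U, (∀ i, e i ∈ Z) →
      (IsPNE Z s aggr α e ↔ ∀ i, e i = s i)) := by
  have haggr_upd : ∀ (e : ι → U) i y, aggr i (Function.update e i y) = aggr i e := by
    intro e i y
    exact hindep i _ _ (fun j hj => Function.update_of_ne hj _ _)
  have key : ∀ (h : 1/2 ≤ α), IsPNE Z s aggr α s := by
    intro h i y hy
    simp only [prefCost, Function.update_self, haggr_upd, dist_self, mul_zero, zero_add]
    have htri : dist (s i) (aggr i s) ≤ dist (s i) y + dist y (aggr i s) := dist_triangle _ _ _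
    have h1 : (0:ℝ) ≤ 1 - α := by linarith
    have h2 : (1 - α) ≤ α := by linarith
    nlinarith [dist_nonneg (x := s i) (y := y), dist_nonneg (x := y) (y := aggr i s)]
  refine ⟨key, ?_⟩
  intro hα e heZ
  constructor
  · intro hpne i
    have := hpne i (s i) (hunrestricted i)
    simp only [prefCost, Function.update_self, haggr_upd, dist_self, mul_zero, zero_add] at this
    have htri : dist (s i) (aggr i e) ≤ dist (s i) (e i) + dist (e i) (aggr i e) :=
      dist_triangle _ _ _
    have h1 : (0:ℝ) ≤ 1 - α := by linarith
    have hd : dist (s i) (e i) = 0 := by nlinarith [dist_nonneg (x := s i) (y := e i)]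
    exact (dist_eq_zero.mp (by rwa [dist_comm] at hd))
  · intro he
    have : e = s := funext he
    subst this
    exact key (le_of_lt hα)
end

section
/- For every agent i, every pure Nash equilibrium e and every state z, c_i(e) ≤ c_i(z) + τ_i·(1−α)·Δ_i(z, e), where Δ_i(z, e) = Σ_{j≠i} w_{ij}·d(z(j), e(j)) is the relative distance and τ_i is the stretch of agent i satisfying d(aggr_i(z_{-i}), aggr_i(e_{-i})) ≤ τ_i·Δ_i(z, e). -/
open Finset

/-- for every agent `i`, equilibrium `e` and state `z`,
`c_i(e) ≤ c_i(z) + τ_i (1-α) Δ_i(z,e)`. -/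
theorem stmt_5 {U : Type*} [MetricSpace U] {ι : Type*} [Fintype ι] [DecidableEq ι]
    (Z : Set U) (s : ι → U) (aggr : ι → (ι → U) → U) (w : ι → ι → ℝ)
    (α : ℝ) (hα0 : 0 ≤ α) (hα1 : α ≤ 1)
    (haggrZ : ∀ i x, aggr i x ∈ Z)
    (hindep : ∀ i (x y : ι → U), (∀ j, j ≠ i → x j = y j) → aggr i x = aggr i y)
    (e z : ι → U) (heZ : ∀ i, e i ∈ Z) (hzZ : ∀ i, z i ∈ Z)
    (heq : ∀ i, ∀ y ∈ Z, prefCost α s aggr i e ≤ prefCost α s aggr i (Function.update e i y))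
    (i : ι) (τi : ℝ) (hτ1 : 1 ≤ τi)
    (hτ : dist (aggr i z) (aggr i e)
        ≤ τi * ∑ j ∈ Finset.univ.erase i, w i j * dist (z j) (e j)) :
    prefCost α s aggr i e ≤ prefCost α s aggr i z
      + τi * (1 - α) * ∑ j ∈ Finset.univ.erase i, w i j * dist (z j) (e j) := by
  have h1 := heq i (z i) (hzZ i)
  have hagg : aggr i (Function.update e i (z i)) = aggr i e :=
    hindep i _ _ (fun j hj => Function.update_of_ne hj _ _)
  simp only [prefCost, Function.update_self, hagg] at h1
  have htri : dist (z i) (aggr i e) ≤ dist (z i) (aggr i z) + dist (aggr i z) (aggr i e) :=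
    dist_triangle _ _ _
  have h1α : 0 ≤ 1 - α := by linarith
  calc prefCost α s aggr i e ≤ α * dist (s i) (z i) + (1 - α) * dist (z i) (aggr i e) := h1
    _ ≤ α * dist (s i) (z i) + (1 - α) * (dist (z i) (aggr i z) + dist (aggr i z) (aggr i e)) := by
        nlinarith
    _ ≤ prefCost α s aggr i z + τi * (1 - α) * ∑ j ∈ Finset.univ.erase i, w i j * dist (z j) (e j) := by
        rw [prefCost]; nlinarith
end

section
/- In a preference game with local aggregation with α > 1/2: for every pure Nash equilibrium e and optimal state o with respect to the social cost SUM(z) = Σ_i c_i(z), SUM(e) ≤ SUM(o)·(1 + ((1−α)/α)·(δτ/β)), where δ is the global social impact, τ the global stretch, and β the global boundary (assuming SUM(o) > 0 and D(o,e) ≠ ∅). -/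
open Finset

/-- if `α > 1/2`, then for every equilibrium `e` and optimal state `o`
(wrt. social cost SUM), `SUM(e) ≤ SUM(o) (1 + ((1-α)/α)(δτ/β))`. -/
theorem stmt_7 {U : Type*} [MetricSpace U] {ι : Type*} [Fintype ι] [DecidableEq ι]
    (Z : Set U) (s : ι → U) (aggr : ι → (ι → U) → U) (w : ι → ι → ℝ)
    (α τ β δ : ℝ) (hα : 1/2 < α) (hα1 : α ≤ 1)
    (haggrZ : ∀ i x, aggr i x ∈ Z)
    (hindep : ∀ i (x y : ι → U), (∀ j, j ≠ i → x j = y j) → aggr i x = aggr i y)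
    (hw0 : ∀ i j, 0 ≤ w i j) (hwii : ∀ i, w i i = 0) (hw1 : ∀ i, ∑ j, w i j = 1)
    -- `δ` is the global social impact
    (hδ : ∀ j, ∑ i, w i j ≤ δ)
    (e o : ι → U) (heZ : ∀ i, e i ∈ Z) (hoZ : ∀ i, o i ∈ Z)
    -- `e` is a pure Nash equilibrium
    (heq : ∀ i, ∀ y ∈ Z, prefCost α s aggr i e ≤ prefCost α s aggr i (Function.update e i y))
    -- `o` is optimal wrt. SUM
    (hopt : ∀ z : ι → U, (∀ i, z i ∈ Z) →
      ∑ i, prefCost α s aggr i o ≤ ∑ i, prefCost α s aggr i z)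
    -- `τ` is the global stretch
    (hτ1 : 1 ≤ τ)
    (hτ : ∀ i, dist (aggr i o) (aggr i e)
        ≤ τ * ∑ j ∈ Finset.univ.erase i, w i j * dist (o j) (e j))
    -- `β` is the global boundary
    (hβ0 : 0 < β)
    (hβ : ∀ i, ∀ x ∈ Z, x ≠ e i → β * dist x (e i) ≤ dist x (s i))
    -- `D(o,e) ⊆ D(o,s)` and `D(o,e) ≠ ∅`, `SUM(o) > 0`
    (hDos : ∀ i, o i ≠ e i → o i ≠ s i)
    (hDne : ∃ i, o i ≠ e i)
    (hSUMo : 0 < ∑ i, prefCost α s aggr i o) :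
    ∑ i, prefCost α s aggr i e
      ≤ (∑ i, prefCost α s aggr i o) * (1 + ((1 - α)/α) * (δ * τ / β)) := by

  obtain ⟨i0, hi0⟩ := hDne
  have hα0 : (0:ℝ) < α := by linarith
  have h1α : (0:ℝ) ≤ 1 - α := by linarith
  have hτ0 : (0:ℝ) ≤ τ := by linarith
  have hδ0 : (0:ℝ) ≤ δ := le_trans (Finset.sum_nonneg fun i _ => hw0 i i0) (hδ i0)
  set So := ∑ i, prefCost α s aggr i o with hSo
  -- Step 1: pointwise NE bound
  have step1 : ∀ i, prefCost α s aggr i e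
      ≤ prefCost α s aggr i o + (1 - α) * dist (aggr i o) (aggr i e) := by
    intro i
    have h := heq i (o i) (hoZ i)
    have hupd : aggr i (Function.update e i (o i)) = aggr i e := by
      apply hindep
      intro j hj
      simp [Function.update_of_ne hj]
    have htri : dist (o i) (aggr i e)
        ≤ dist (o i) (aggr i o) + dist (aggr i o) (aggr i e) := dist_triangle _ _ _
    have htri' := mul_le_mul_of_nonneg_left htri h1α
    simp only [prefCost, Function.update_self, hupd] at h ⊢
    nlinarith [h, htri']
  have key : ∑ i, prefCost α s aggr i e
      ≤ So + (1 - α) * ∑ i, dist (aggr i o) (aggr i e) := by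
    rw [hSo, Finset.mul_sum, ← Finset.sum_add_distrib]
    exact Finset.sum_le_sum fun i _ => step1 i
  -- Step 2: stretch + social impact
  have step2 : ∑ i, dist (aggr i o) (aggr i e) ≤ τ * δ * ∑ j, dist (o j) (e j) := by
    calc ∑ i, dist (aggr i o) (aggr i e)
        ≤ ∑ i, τ * ∑ j ∈ Finset.univ.erase i, w i j * dist (o j) (e j) :=
          Finset.sum_le_sum fun i _ => hτ i
      _ = τ * ∑ i, ∑ j, w i j * dist (o j) (e j) := by
          rw [← Finset.mul_sum]
          congr 1
          refine Finset.sum_congr rfl fun i _ => ?_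
          exact Finset.sum_erase _ (by simp [hwii i])
      _ = τ * ∑ j, (∑ i, w i j) * dist (o j) (e j) := by
          rw [Finset.sum_comm]
          simp [Finset.sum_mul]
      _ ≤ τ * ∑ j, δ * dist (o j) (e j) := by
          refine mul_le_mul_of_nonneg_left (Finset.sum_le_sum fun j _ => ?_) hτ0
          exact mul_le_mul_of_nonneg_right (hδ j) dist_nonneg
      _ = τ * δ * ∑ j, dist (o j) (e j) := by simp only [Finset.mul_sum, mul_assoc]
  -- Step 3: boundary bound
  have step3 : α * β * ∑ j, dist (o j) (e j) ≤ So := by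
    rw [hSo, Finset.mul_sum]
    refine Finset.sum_le_sum fun j _ => ?_
    by_cases h : o j = e j
    · simp only [h, dist_self, mul_zero, prefCost]
      positivity
    · have hb := hβ j (o j) (hoZ j) h
      have hb' := mul_le_mul_of_nonneg_left hb (le_of_lt hα0)
      have : dist (o j) (s j) = dist (s j) (o j) := dist_comm _ _
      simp only [prefCost]
      nlinarith [dist_nonneg (x := o j) (y := aggr j o)]
  have hSumd : ∑ j, dist (o j) (e j) ≤ So / (α * β) := by
    rw [le_div_iff₀ (by positivity)]
    linarith [step3]
  have h5 : (1 - α) * (τ * δ * ∑ j, dist (o j) (e j))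
      ≤ So * ((1 - α)/α * (δ * τ / β)) := by
    have h6 : (1 - α) * (τ * δ * ∑ j, dist (o j) (e j))
        ≤ (1 - α) * (τ * δ * (So / (α * β))) := by
      refine mul_le_mul_of_nonneg_left ?_ h1α
      exact mul_le_mul_of_nonneg_left hSumd (by positivity)
    have h7 : (1 - α) * (τ * δ * (So / (α * β))) = So * ((1 - α)/α * (δ * τ / β)) := by
      field_simp
    linarith [h6]
  have hmul := mul_le_mul_of_nonneg_left step2 h1α
  have hg : So * (1 + (1 - α)/α * (δ * τ / β))
      = So + So * ((1 - α)/α * (δ * τ / β)) := by ring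
  rw [hg]
  linarith [key, hmul, h5]
end

section
/- In a preference game with local aggregation with α > 1/2: for every pure Nash equilibrium e and optimal state o with respect to the maximum cost MAX(z) = max_i c_i(z), MAX(e) ≤ MAX(o)·(1 + ((1−α)/α)·(τ/β)), where τ is the global stretch and β the global boundary (assuming MAX(o) > 0). -/
open Finset

/-- if `α > 1/2`, then for every equilibrium `e` and optimal state `o`
(wrt. maximum cost MAX), `MAX(e) ≤ MAX(o) (1 + ((1-α)/α)(τ/β))`. -/
theorem stmt_8 {U : Type*} [MetricSpace U] {ι : Type*} [Fintype ι] [DecidableEq ι]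
    [Nonempty ι]
    (Z : Set U) (s : ι → U) (aggr : ι → (ι → U) → U) (w : ι → ι → ℝ)
    (α τ β : ℝ) (hα : 1/2 < α) (hα1 : α ≤ 1)
    (haggrZ : ∀ i x, aggr i x ∈ Z)
    (hindep : ∀ i (x y : ι → U), (∀ j, j ≠ i → x j = y j) → aggr i x = aggr i y)
    (hw0 : ∀ i j, 0 ≤ w i j) (hwii : ∀ i, w i i = 0) (hw1 : ∀ i, ∑ j, w i j = 1)
    (e o : ι → U) (heZ : ∀ i, e i ∈ Z) (hoZ : ∀ i, o i ∈ Z)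
    -- `e` is a pure Nash equilibrium
    (heq : ∀ i, ∀ y ∈ Z, prefCost α s aggr i e ≤ prefCost α s aggr i (Function.update e i y))
    -- `o` is optimal wrt. MAX
    (hopt : ∀ z : ι → U, (∀ i, z i ∈ Z) →
      Finset.univ.sup' Finset.univ_nonempty (fun i => prefCost α s aggr i o)
        ≤ Finset.univ.sup' Finset.univ_nonempty (fun i => prefCost α s aggr i z))
    -- `τ` is the global stretch
    (hτ1 : 1 ≤ τ)
    (hτ : ∀ i, dist (aggr i o) (aggr i e)
        ≤ τ * ∑ j ∈ Finset.univ.erase i, w i j * dist (o j) (e j))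
    -- `β` is the global boundary
    (hβ0 : 0 < β)
    (hβ : ∀ i, ∀ x ∈ Z, x ≠ e i → β * dist x (e i) ≤ dist x (s i))
    (hMAXo : 0 < Finset.univ.sup' Finset.univ_nonempty (fun i => prefCost α s aggr i o)) :
    Finset.univ.sup' Finset.univ_nonempty (fun i => prefCost α s aggr i e)
      ≤ (Finset.univ.sup' Finset.univ_nonempty (fun i => prefCost α s aggr i o))
          * (1 + ((1 - α)/α) * (τ / β)) := by

  set M := Finset.univ.sup' Finset.univ_nonempty (fun i => prefCost α s aggr i o) with hM
  have hα0 : (0:ℝ) < α := by linarith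
  have h1α : (0:ℝ) ≤ 1 - α := by linarith
  have hτ0 : (0:ℝ) ≤ τ := by linarith
  have hcoM : ∀ i, prefCost α s aggr i o ≤ M := by
    intro i
    rw [hM]
    exact Finset.le_sup' (fun j => prefCost α s aggr j o) (Finset.mem_univ i)
  have hd : ∀ j, dist (o j) (e j) ≤ M / (α * β) := by
    intro j
    have hc : α * dist (s j) (o j) ≤ M := by
      have h := hcoM j
      unfold prefCost at h
      nlinarith [dist_nonneg (x := o j) (y := aggr j o)]
    by_cases h : o j = e j
    · simp only [h, dist_self]
      positivity
    · have hb := hβ j (o j) (hoZ j) h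
      rw [dist_comm (o j) (s j)] at hb
      rw [le_div_iff₀ (by positivity)]
      nlinarith
  apply Finset.sup'_le
  intro i _
  have haggr : aggr i (Function.update e i (o i)) = aggr i e :=
    hindep i _ _ (fun j hj => Function.update_of_ne hj _ _)
  have step1 : prefCost α s aggr i e ≤ α * dist (s i) (o i) + (1-α) * dist (o i) (aggr i e) := by
    have h := heq i (o i) (hoZ i)
    simpa [prefCost, Function.update_self, haggr] using h
  have step2 : dist (o i) (aggr i e) ≤ dist (o i) (aggr i o) + dist (aggr i o) (aggr i e) :=
    dist_triangle _ _ _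
  have hsum : ∑ j ∈ Finset.univ.erase i, w i j * dist (o j) (e j) ≤ M/(α*β) := by
    have hMab : (0:ℝ) ≤ M / (α*β) := by positivity
    calc ∑ j ∈ Finset.univ.erase i, w i j * dist (o j) (e j)
        ≤ ∑ j ∈ Finset.univ.erase i, w i j * (M/(α*β)) := by
          refine Finset.sum_le_sum fun j _ => ?_
          exact mul_le_mul_of_nonneg_left (hd j) (hw0 i j)
      _ = (∑ j ∈ Finset.univ.erase i, w i j) * (M/(α*β)) := by rw [← Finset.sum_mul]
      _ = (∑ j, w i j) * (M/(α*β)) := by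
          rw [Finset.sum_erase _ (hwii i)]
      _ = M/(α*β) := by rw [hw1 i, one_mul]
  have step3 : dist (aggr i o) (aggr i e) ≤ τ * (M/(α*β)) := by
    refine (hτ i).trans ?_
    exact mul_le_mul_of_nonneg_left hsum hτ0
  have hcio : prefCost α s aggr i o = α * dist (s i) (o i) + (1-α) * dist (o i) (aggr i o) := rfl
  have key : prefCost α s aggr i e ≤ prefCost α s aggr i o + (1-α) * (τ * (M/(α*β))) := by
    rw [hcio]
    nlinarith [mul_le_mul_of_nonneg_left step3 h1α,
      mul_le_mul_of_nonneg_left step2 h1α]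
  have heq2 : M * (1 + ((1 - α)/α) * (τ / β)) = M + (1-α) * (τ * (M/(α*β))) := by
    field_simp
  rw [heq2]
  linarith [hcoM i]
end

section
/- If α > 1/2 and d is an exact metric on U, then for every pure Nash equilibrium e, every agent i, and every strategy x ∈ Z with x ≠ e(i), d(x, s_i) ≥ ((2α−1)/(2α))·d(x, e(i)); i.e., the global boundary β is at least (2α−1)/(2α). -/
/-- if `α > 1/2` and `d` is an exact metric, then for every equilibrium `e`,
agent `i` and strategy `x ∈ Z` with `x ≠ e i`,
`d(x, s_i) ≥ ((2α-1)/(2α)) d(x, e_i)`; i.e., the boundary is at least `(2α-1)/(2α)`. -/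
theorem stmt_9 {U : Type*} [MetricSpace U] {ι : Type*} [DecidableEq ι]
    (Z : Set U) (s : ι → U) (aggr : ι → (ι → U) → U)
    (α : ℝ) (hα : 1/2 < α) (hα1 : α ≤ 1)
    (haggrZ : ∀ i x, aggr i x ∈ Z)
    (hindep : ∀ i (x y : ι → U), (∀ j, j ≠ i → x j = y j) → aggr i x = aggr i y)
    (e : ι → U) (heZ : ∀ i, e i ∈ Z)
    (heq : ∀ i, ∀ y ∈ Z, prefCost α s aggr i e ≤ prefCost α s aggr i (Function.update e i y)) :
    ∀ i, ∀ x ∈ Z, x ≠ e i →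
      ((2*α - 1)/(2*α)) * dist x (e i) ≤ dist x (s i) := by
  intro i x hx _
  have hagg : aggr i (Function.update e i x) = aggr i e :=
    hindep i _ _ (fun j hj => Function.update_of_ne hj _ _)
  have h := heq i x hx
  simp only [prefCost, Function.update_self, hagg] at h
  have t1 : dist x (aggr i e) ≤ dist x (e i) + dist (e i) (aggr i e) := dist_triangle _ _ _
  have t2 : dist x (e i) ≤ dist x (s i) + dist (s i) (e i) := dist_triangle _ _ _
  have hsx : dist (s i) x = dist x (s i) := dist_comm _ _
  have hpos : 0 < 2 * α := by linarith
  rw [div_mul_eq_mul_div, div_le_iff₀ hpos]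
  nlinarith [dist_nonneg (x := x) (y := e i), dist_nonneg (x := x) (y := s i)]
end

section
/- Let the aggregation function be the Fréchet median: aggr_i(z_{-i}) minimizes Σ_{j≠i} w_{ij}·d(y, z(j)) over y ∈ Z, with d an exact metric on Z. If o is a consensus state (o(j) = aggr_i(o_{-i}) for all j ≠ i by unanimity), then for every state e and agent i, d(aggr_i(o_{-i}), aggr_i(e_{-i})) ≤ 2·Σ_{j≠i} w_{ij}·d(o(j), e(j)). -/
open Finset

/-- when the aggregation function is the Fréchet median and the state `o`
is a consensus, `d(aggr_i(o), aggr_i(e)) ≤ 2 Σ_{j≠i} w_{ij} d(o(j), e(j))`. -/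
theorem stmt_13 {U : Type*} [MetricSpace U] {ι : Type*} [Fintype ι] [DecidableEq ι]
    (Z : Set U) (aggr : ι → (ι → U) → U) (w : ι → ι → ℝ)
    (hw0 : ∀ i j, 0 ≤ w i j) (hwii : ∀ i, w i i = 0)
    (hw1 : ∀ i, ∑ j ∈ Finset.univ.erase i, w i j = 1)
    (haggrZ : ∀ i x, aggr i x ∈ Z)
    -- `aggr` is the Fréchet median: it minimizes the weighted sum of distances over `Z`
    (hmedian : ∀ i (z : ι → U), ∀ y ∈ Z,
      (∑ j ∈ Finset.univ.erase i, w i j * dist (aggr i z) (z j))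
        ≤ ∑ j ∈ Finset.univ.erase i, w i j * dist y (z j))
    (i : ι) (o e : ι → U) (hoZ : ∀ j, o j ∈ Z) (heZ : ∀ j, e j ∈ Z)
    -- `o` is a consensus (so by unanimity every coordinate equals `aggr i o`)
    (hcons : ∀ j, o j = aggr i o) :
    dist (aggr i o) (aggr i e)
      ≤ 2 * ∑ j ∈ Finset.univ.erase i, w i j * dist (o j) (e j) := by
  set A := aggr i o
  set B := aggr i e
  have hAoj : ∀ j, dist A (e j) = dist (o j) (e j) := fun j => by rw [hcons j]
  have h1 : dist A B = ∑ j ∈ Finset.univ.erase i, w i j * dist A B := by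
    rw [← Finset.sum_mul, hw1 i, one_mul]
  have h2 : ∀ j, w i j * dist A B ≤ w i j * (dist A (e j) + dist B (e j)) := by
    intro j
    apply mul_le_mul_of_nonneg_left _ (hw0 i j)
    calc dist A B ≤ dist A (e j) + dist (e j) B := dist_triangle _ _ _
      _ = dist A (e j) + dist B (e j) := by rw [dist_comm (e j) B]
  calc dist A B = ∑ j ∈ Finset.univ.erase i, w i j * dist A B := h1
    _ ≤ ∑ j ∈ Finset.univ.erase i, w i j * (dist A (e j) + dist B (e j)) :=
        Finset.sum_le_sum fun j _ => h2 j
    _ = (∑ j ∈ Finset.univ.erase i, w i j * dist A (e j))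
        + ∑ j ∈ Finset.univ.erase i, w i j * dist B (e j) := by
        rw [← Finset.sum_add_distrib]; congr 1; ext j; ring
    _ ≤ (∑ j ∈ Finset.univ.erase i, w i j * dist A (e j))
        + ∑ j ∈ Finset.univ.erase i, w i j * dist A (e j) := by
        exact add_le_add (le_refl _) (hmedian i e A (haggrZ i o))
    _ = 2 * ∑ j ∈ Finset.univ.erase i, w i j * dist (o j) (e j) := by
        simp only [hAoj]; ring
end

section
/- In the k-approval voting game with α > 1/2: for every pure Nash equilibrium e, every agent i, and every strategy x ∈ Z with x ≠ e(i), d(x, s_i) ≥ ((2α−1)/(2α))²·d(x, e(i)), where d is the squared Euclidean distance; i.e., the global boundary β ≥ ((2α−1)/(2α))². -/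
open Finset

/-- Squared Euclidean distance on `Fin m → ℝ`. -/
def sqd {m : ℕ} (u v : Fin m → ℝ) : ℝ := ∑ ℓ, (u ℓ - v ℓ)^2

/-- Strategy space of the `k`-approval voting game: binary strings with `k` ones. -/
def Zvote (m k : ℕ) : Set (Fin m → ℝ) :=
  {u | (∀ ℓ, u ℓ = 0 ∨ u ℓ = 1) ∧ ∑ ℓ, u ℓ = k}

/-- Strategy universe of the `k`-approval voting game. -/
def Uvote (m k : ℕ) : Set (Fin m → ℝ) :=
  {u | (∀ ℓ, 0 ≤ u ℓ ∧ u ℓ ≤ 1) ∧ ∑ ℓ, u ℓ = k}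

/-- Cost of agent `i` in the `k`-approval voting game. -/
def voteCost {m : ℕ} {ι : Type*} (α : ℝ) (s : ι → Fin m → ℝ)
    (aggr : ι → (ι → Fin m → ℝ) → (Fin m → ℝ)) (i : ι) (z : ι → Fin m → ℝ) : ℝ :=
  α * sqd (s i) (z i) + (1 - α) * sqd (z i) (aggr i z)

/-- Pointwise triangle inequality for squared distance on binary values. -/
lemma bin_tri (u v w : ℝ) (hu : u = 0 ∨ u = 1) (hv : v = 0 ∨ v = 1)
    (hw : w = 0 ∨ w = 1) : (u - w)^2 ≤ (u - v)^2 + (v - w)^2 := by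
  rcases hu with h1 | h1 <;> rcases hv with h2 | h2 <;> rcases hw with h3 | h3 <;>
    subst h1 <;> subst h2 <;> subst h3 <;> norm_num

/-- in the `k`-approval voting game with `α > 1/2`, for every pure Nash
equilibrium `e`, agent `i`, and strategy `x ∈ Z` with `x ≠ e i`,
`d(x, s_i) ≥ ((2α-1)/(2α))² d(x, e_i)`; i.e., the global boundary is at least
`((2α-1)/(2α))²`. -/
theorem stmt_14 {m k : ℕ} (hkm : k < m) {ι : Type*} [DecidableEq ι]
    (s : ι → Fin m → ℝ) (aggr : ι → (ι → Fin m → ℝ) → (Fin m → ℝ))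
    (α : ℝ) (hα : 1/2 < α) (hα1 : α ≤ 1)
    (hsU : ∀ i, s i ∈ Uvote m k)
    (haggrZ : ∀ i x, aggr i x ∈ Zvote m k)
    (hindep : ∀ i (x y : ι → Fin m → ℝ), (∀ j, j ≠ i → x j = y j) → aggr i x = aggr i y)
    (e : ι → Fin m → ℝ) (heZ : ∀ i, e i ∈ Zvote m k)
    (heq : ∀ i, ∀ y ∈ Zvote m k,
      voteCost α s aggr i e ≤ voteCost α s aggr i (Function.update e i y)) :
    ∀ i, ∀ x ∈ Zvote m k, x ≠ e i →
      ((2*α - 1)/(2*α))^2 * sqd x (e i) ≤ sqd x (s i) := by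
  intro i x hxZ hxe
  have hαpos : (0:ℝ) < α := by linarith
  obtain ⟨hxb, hxs⟩ := hxZ
  obtain ⟨heb, hes⟩ := heZ i
  obtain ⟨hsb, _⟩ := hsU i
  obtain ⟨hab, _⟩ := haggrZ i e
  -- equilibrium inequality
  have hagg : aggr i (Function.update e i x) = aggr i e := by
    apply hindep; intro j hj; simp [Function.update_of_ne hj]
  have hE := heq i x ⟨hxb, hxs⟩
  simp only [voteCost, Function.update_self, hagg] at hE
  -- triangle inequality on binary points
  have htri : sqd x (aggr i e) ≤ sqd x (e i) + sqd (e i) (aggr i e) := by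
    unfold sqd
    rw [← Finset.sum_add_distrib]
    exact Finset.sum_le_sum fun ℓ _ =>
      bin_tri (x ℓ) (e i ℓ) (aggr i e ℓ) (hxb ℓ) (heb ℓ) (hab ℓ)
  -- key scalar inequality
  have hkey : α * (sqd (s i) (e i) - sqd (s i) x) ≤ (1 - α) * sqd x (e i) := by
    nlinarith [hE, htri]
  -- coordinate set where x and e i differ
  set Δ : Finset (Fin m) := Finset.univ.filter (fun ℓ => x ℓ ≠ e i ℓ) with hΔ
  set t : Fin m → ℝ := fun ℓ => |x ℓ - s i ℓ| with ht
  have hDeq : sqd x (e i) = (Δ.card : ℝ) := by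
    unfold sqd
    rw [← Finset.sum_filter_add_sum_filter_not Finset.univ (fun ℓ => x ℓ ≠ e i ℓ)]
    have h1 : ∀ ℓ ∈ Δ, (x ℓ - e i ℓ)^2 = 1 := by
      intro ℓ hℓ
      have hne : x ℓ ≠ e i ℓ := (Finset.mem_filter.mp hℓ).2
      rcases hxb ℓ with h | h <;> rcases heb ℓ with h' | h' <;> simp_all
    have h2 : ∀ ℓ ∈ Finset.univ.filter (fun ℓ => ¬ x ℓ ≠ e i ℓ), (x ℓ - e i ℓ)^2 = 0 := by
      intro ℓ hℓ
      have : x ℓ = e i ℓ := not_not.mp (Finset.mem_filter.mp hℓ).2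
      simp [this]
    rw [Finset.sum_congr rfl h1, Finset.sum_congr rfl h2]
    simp [hΔ]
  -- per-coordinate facts on Δ
  have hcoord : ∀ ℓ ∈ Δ, (e i ℓ - s i ℓ)^2 - (x ℓ - s i ℓ)^2 = 1 - 2 * t ℓ := by
    intro ℓ hℓ
    have hne : x ℓ ≠ e i ℓ := (Finset.mem_filter.mp hℓ).2
    obtain ⟨hs0, hs1⟩ := hsb ℓ
    rcases hxb ℓ with h | h <;> rcases heb ℓ with h' | h' <;> rw [ht] <;>
      simp only [h, h'] at hne ⊢
    · exact absurd rfl hne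
    · rw [abs_of_nonpos (by linarith)]; ring
    · rw [abs_of_nonneg (by linarith)]; ring
    · exact absurd rfl hne
  -- difference of distances as a sum over Δ
  have hdiff : sqd (s i) (e i) - sqd (s i) x = ∑ ℓ ∈ Δ, (1 - 2 * t ℓ) := by
    unfold sqd
    rw [← Finset.sum_sub_distrib,
      ← Finset.sum_filter_add_sum_filter_not Finset.univ (fun ℓ => x ℓ ≠ e i ℓ)
        (fun ℓ => (s i ℓ - e i ℓ)^2 - (s i ℓ - x ℓ)^2)]
    have h1 : ∀ ℓ ∈ Δ, (s i ℓ - e i ℓ)^2 - (s i ℓ - x ℓ)^2 = 1 - 2 * t ℓ := by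
      intro ℓ hℓ
      linear_combination hcoord ℓ hℓ
    have h2 : ∀ ℓ ∈ Finset.univ.filter (fun ℓ => ¬ x ℓ ≠ e i ℓ),
        (s i ℓ - e i ℓ)^2 - (s i ℓ - x ℓ)^2 = 0 := by
      intro ℓ hℓ
      have : x ℓ = e i ℓ := not_not.mp (Finset.mem_filter.mp hℓ).2
      rw [this]; ring
    rw [Finset.sum_congr rfl h1, Finset.sum_congr rfl h2]
    simp
  -- abbreviations
  set D : ℝ := (Δ.card : ℝ) with hD
  set T : ℝ := ∑ ℓ ∈ Δ, t ℓ with hT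
  set S : ℝ := ∑ ℓ ∈ Δ, t ℓ ^ 2 with hS
  have hΔne : Δ.Nonempty := by
    obtain ⟨ℓ, hℓ⟩ := Function.ne_iff.mp hxe
    exact ⟨ℓ, Finset.mem_filter.mpr ⟨Finset.mem_univ ℓ, hℓ⟩⟩
  have hD1 : (1:ℝ) ≤ D := by
    have h := Finset.card_pos.mpr hΔne
    simp only [hD]
    exact_mod_cast h
  have hDpos : (0:ℝ) < D := by linarith
  -- sum of (1 - 2t) over Δ equals D - 2T
  have hsum12 : ∑ ℓ ∈ Δ, (1 - 2 * t ℓ) = D - 2 * T := by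
    rw [Finset.sum_sub_distrib, Finset.sum_const, ← Finset.mul_sum]
    simp [hD, hT]
  -- lower bound on T
  have hTlb : ((2*α - 1)/(2*α)) * D ≤ T := by
    rw [div_mul_eq_mul_div, div_le_iff₀ (by linarith : (0:ℝ) < 2*α)]
    have := hkey
    rw [hdiff, hsum12, hDeq] at this
    nlinarith [this]
  have hβnn : (0:ℝ) ≤ (2*α - 1)/(2*α) := div_nonneg (by linarith) (by linarith)
  have hTnn : 0 ≤ T := le_trans (mul_nonneg hβnn hDpos.le) hTlb
  -- Cauchy–Schwarz
  have hCS : T ^ 2 ≤ D * S := sq_sum_le_card_mul_sum_sq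
  -- S bounds sqd x (s i)
  have hSle : S ≤ sqd x (s i) := by
    have hst : ∀ ℓ, t ℓ ^ 2 = (x ℓ - s i ℓ)^2 := fun ℓ => sq_abs _
    unfold sqd
    rw [hS]
    simp_rw [← hst]
    exact Finset.sum_le_sum_of_subset_of_nonneg (Finset.subset_univ Δ)
      (fun ℓ _ _ => by positivity)
  -- finish
  have hsq : (((2*α - 1)/(2*α)) * D)^2 ≤ T^2 :=
    pow_le_pow_left₀ (mul_nonneg hβnn hDpos.le) hTlb 2
  rw [hDeq]
  have hfin : D * (((2*α - 1)/(2*α))^2 * D) ≤ D * S := by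
    have h0 : D * (((2*α - 1)/(2*α))^2 * D) = (((2*α - 1)/(2*α)) * D)^2 := by ring
    rw [h0]; exact le_trans hsq hCS
  have := (mul_le_mul_iff_right₀ hDpos).mp hfin
  linarith
end

section
/- For α ∈ (0, 1/2] and unanimous aggregation, there exist restricted instances (all s_i ∉ Z) where the price of anarchy is unbounded: with U = {a, b, s}, Z = {a, b}, s_i = s for all agents, and metric d with d(b, s) = ε > 0 and d(a,s) fixed, the consensus-on-a equilibrium has SUM = n·α·d(a,s) while the consensus-on-b state has SUM = n·α·ε, so the PoA ratio is at least d(a,s)/ε, which tends to infinity as ε → 0. -/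
open Finset

/-- Cost of an agent, for an arbitrary distance function `d`. -/
def gcost {U : Type*} {ι : Type*} (d : U → U → ℝ) (α : ℝ)
    (s : ι → U) (aggr : ι → (ι → U) → U) (i : ι) (z : ι → U) : ℝ :=
  α * d (s i) (z i) + (1 - α) * d (z i) (aggr i z)

/-- for `α ∈ (0, 1/2]` there are restricted instances (on the universe
`{a, b, s} = Fin 3`, strategy space `Z = {a, b}`, all preferred strategies equal to `s`)
whose price of anarchy exceeds any bound `B`: there is an equilibrium `e` and a state `z`
with `0 < SUM(z)` and `B * SUM(z) ≤ SUM(e)`. -/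
theorem stmt_17 (α : ℝ) (hα0 : 0 < α) (hα : α ≤ 1/2) (n : ℕ) (hn : 2 ≤ n) (B : ℝ) :
    ∃ (d : Fin 3 → Fin 3 → ℝ) (Z : Set (Fin 3)) (s : Fin n → Fin 3)
      (aggr : Fin n → (Fin n → Fin 3) → Fin 3),
      -- `d` is a metric on the universe `Fin 3`
      (∀ x, d x x = 0) ∧ (∀ x y, x ≠ y → 0 < d x y) ∧
      (∀ x y, d x y = d y x) ∧ (∀ x y z, d x z ≤ d x y + d y z) ∧
      -- the instance is restricted: no preferred strategy lies in `Z`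
      Z = {0, 1} ∧ (∀ i, s i ∉ Z) ∧
      -- the aggregation function is feasible
      (∀ i x, aggr i x ∈ Z) ∧
      (∀ i (x y : Fin n → Fin 3), (∀ j, j ≠ i → x j = y j) → aggr i x = aggr i y) ∧
      (∀ i (z : Fin n → Fin 3) (x : Fin 3), x ∈ Z → (∀ j, j ≠ i → z j = x) → aggr i z = x) ∧
      -- an equilibrium `e` and a state `z` witnessing an unbounded PoA ratio
      ∃ e z : Fin n → Fin 3, (∀ i, e i ∈ Z) ∧ (∀ i, z i ∈ Z) ∧
        (∀ i, ∀ y ∈ Z, gcost d α s aggr i e ≤ gcost d α s aggr i (Function.update e i y)) ∧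
        0 < (∑ i, gcost d α s aggr i z) ∧
        B * (∑ i, gcost d α s aggr i z) ≤ ∑ i, gcost d α s aggr i e := by
  classical
  set ε : ℝ := (max B 1)⁻¹ with hεdef
  have hmax : (0:ℝ) < max B 1 := lt_of_lt_of_le one_pos (le_max_right _ _)
  have hε : 0 < ε := inv_pos.mpr hmax
  have hε1 : ε ≤ 1 := by
    rw [hεdef, inv_le_one_iff₀]
    exact Or.inr (le_max_right _ _)
  have hBε : B * ε ≤ 1 := by
    have h1 : B * ε ≤ (max B 1) * ε :=
      mul_le_mul_of_nonneg_right (le_max_left _ _) hε.le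
    have h2 : (max B 1) * ε = 1 := mul_inv_cancel₀ hmax.ne'
    linarith
  set d : Fin 3 → Fin 3 → ℝ := fun x y =>
    if x = y then 0 else if (x = 1 ∧ y = 2) ∨ (x = 2 ∧ y = 1) then ε else 1 with hd
  set aggr : Fin n → (Fin n → Fin 3) → Fin 3 := fun i x =>
    if ∀ j, j ≠ i → x j = 1 then 1 else 0 with haggr
  have hexj : ∀ i : Fin n, ∃ j : Fin n, j ≠ i := fun i =>
    Fintype.exists_ne_of_one_lt_card (by simp; omega) i
  -- aggregate values
  have hagg1 : ∀ (i : Fin n) (w : Fin n → Fin 3), (∀ k, k ≠ i → w k = 1) → aggr i w = 1 := by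
    intro i w hw
    simp only [haggr]
    exact if_pos hw
  have hagg0 : ∀ (i : Fin n) (w : Fin n → Fin 3), (∃ k, k ≠ i ∧ w k ≠ 1) → aggr i w = 0 := by
    intro i w ⟨k, hk, hwk⟩
    simp only [haggr]
    exact if_neg (fun h => hwk (h k hk))
  -- distance values
  have hd00 : d 0 0 = 0 := by simp [hd]
  have hd21 : d 2 1 = ε := by simp [hd, Fin.ext_iff]
  have hd20 : d 2 0 = 1 := by norm_num [hd, Fin.ext_iff]
  have hd10 : d 1 0 = 1 := by norm_num [hd, Fin.ext_iff]
  have hd11 : d 1 1 = 0 := by simp [hd]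
  refine ⟨d, {0, 1}, fun _ => 2, aggr, ?_, ?_, ?_, ?_, rfl, ?_, ?_, ?_, ?_, ?_⟩
  · intro x; simp [hd]
  · intro x y hxy
    fin_cases x <;> fin_cases y <;>
      first
        | exact absurd rfl hxy
        | (norm_num [hd, Fin.ext_iff]; try linarith)
  · intro x y
    fin_cases x <;> fin_cases y <;> norm_num [hd, Fin.ext_iff]
  · intro x y z
    fin_cases x <;> fin_cases y <;> fin_cases z <;> norm_num [hd, Fin.ext_iff] <;> linarith
  · intro i
    simp [Set.mem_insert_iff]
  · intro i x
    by_cases h : ∀ j, j ≠ i → x j = 1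
    · rw [hagg1 i x h]; exact Or.inr rfl
    · push_neg at h
      obtain ⟨k, hk, hxk⟩ := h
      rw [hagg0 i x ⟨k, hk, hxk⟩]; exact Or.inl rfl
  · intro i x y hxy
    have hiff : (∀ j, j ≠ i → x j = 1) ↔ (∀ j, j ≠ i → y j = 1) := by
      constructor <;> intro h j hj
      · rw [← hxy j hj]; exact h j hj
      · rw [hxy j hj]; exact h j hj
    simp only [haggr, hiff]
  · intro i z x hx hz
    obtain ⟨j, hj⟩ := hexj i
    rcases hx with hx | hx
    · subst hx
      refine hagg0 i z ⟨j, hj, ?_⟩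
      rw [hz j hj]; decide
    · simp only [Set.mem_singleton_iff] at hx
      subst hx
      exact hagg1 i z hz
  · refine ⟨fun _ => 0, fun _ => 1, fun i => Or.inl rfl, fun i => Or.inr rfl, ?_, ?_, ?_⟩
    · -- equilibrium
      intro i y hy
      obtain ⟨j, hj⟩ := hexj i
      have he : aggr i (fun _ => 0) = 0 := hagg0 i _ ⟨j, hj, by decide⟩
      have hce : gcost d α (fun _ => (2:Fin 3)) aggr i (fun _ => 0) = α := by
        rw [gcost, he, hd20, hd00]; ring
      rcases hy with hy | hy
      · subst hy
        have : Function.update (fun _ => (0:Fin 3)) i 0 = fun _ => (0:Fin 3) := by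
          funext k; by_cases h : k = i <;> simp [Function.update, h]
        rw [this]
      · simp only [Set.mem_singleton_iff] at hy
        subst hy
        have hu : aggr i (Function.update (fun _ => (0:Fin 3)) i 1) = 0 := by
          refine hagg0 i _ ⟨j, hj, ?_⟩
          simp [Function.update, hj]
        have hui : Function.update (fun _ => (0:Fin 3)) i 1 i = 1 := by
          simp [Function.update]
        rw [hce, gcost, hui, hu, hd21, hd10]
        nlinarith
    · -- sum over z positive
      have hcz : ∀ i : Fin n, gcost d α (fun _ => (2:Fin 3)) aggr i (fun _ => 1) = α * ε := by
        intro i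
        have h1 : aggr i (fun _ => 1) = 1 := hagg1 i _ (fun _ _ => rfl)
        rw [gcost, h1, hd21, hd11]; ring
      rw [Finset.sum_congr rfl (fun i _ => hcz i)]
      rw [Finset.sum_const, Finset.card_univ, Fintype.card_fin]
      have hn0 : (0:ℝ) < n := by positivity
      have := mul_pos hα0 hε
      simp only [nsmul_eq_mul]
      positivity
    · -- PoA bound
      have hcz : ∀ i : Fin n, gcost d α (fun _ => (2:Fin 3)) aggr i (fun _ => 1) = α * ε := by
        intro i
        have h1 : aggr i (fun _ => 1) = 1 := hagg1 i _ (fun _ _ => rfl)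
        rw [gcost, h1, hd21, hd11]; ring
      have hce : ∀ i : Fin n, gcost d α (fun _ => (2:Fin 3)) aggr i (fun _ => 0) = α := by
        intro i
        obtain ⟨j, hj⟩ := hexj i
        have h0 : aggr i (fun _ => 0) = 0 := hagg0 i _ ⟨j, hj, by decide⟩
        rw [gcost, h0, hd20, hd00]; ring
      rw [Finset.sum_congr rfl (fun i _ => hcz i), Finset.sum_congr rfl (fun i _ => hce i)]
      rw [Finset.sum_const, Finset.sum_const, Finset.card_univ, Fintype.card_fin]
      simp only [nsmul_eq_mul]
      calc B * (n * (α * ε)) = (n * α) * (B * ε) := by ring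
        _ ≤ (n * α) * 1 := by
            apply mul_le_mul_of_nonneg_left hBε
            positivity
        _ = n * α := by ring
end
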